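/- Let A ∈ ℝ^{K×d}, Γ ∈ ℝ^{K×K} symmetric positive definite, y ∈ ℝ^K, and let x^{(1)},…,x^{(J)} ∈ ℝ^d be an ensemble with mean x̄, empirical covariance C(x) = (1/J)∑_j (x^{(j)} − x̄)(x^{(j)} − x̄)ᵀ, and empirical cross-covariance C^{x,G}(x) = (1/J)∑_j (x^{(j)} − x̄)(Ax^{(j)} − Ax̄)ᵀ for the linear forward map G(x) = Ax. Then C^{x,G}(x) = C(x)Aᵀ, and consequently, for each j, C^{x,G}(x)Γ⁻¹(y − Ax^{(j)}) = −C(x)∇Φ(x^{(j)}), where Φ(x) = ½(Ax − y)ᵀΓ⁻¹(Ax − y); i.e., for linear forward maps the deterministic EKI dynamics dx^{(j)}/dt = C^{x,G}(x)Γ⁻¹(y − Ax^{(j)}) coincide with the covariance-preconditioned gradient flow dx^{(j)}/dt = −C(x)∇Φ(x^{(j)}). -/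

import Mathlib

open Matrix MeasureTheory RealInnerProductSpace Filter

noncomputable section

/-- Matrix–vector multiplication, viewed as a map on Euclidean spaces. -/
def mulVecE {m n : ℕ} (M : Matrix (Fin m) (Fin n) ℝ) (v : EuclideanSpace ℝ (Fin n)) :
    EuclideanSpace ℝ (Fin m) :=
  WithLp.toLp 2 (fun i => ∑ j, M i j * v j)

/-- Ensemble mean `x̄ = (1/J) ∑ⱼ x⁽ʲ⁾`. -/
def emean {d J : ℕ} (x : Fin J → EuclideanSpace ℝ (Fin d)) : EuclideanSpace ℝ (Fin d) :=
  (J : ℝ)⁻¹ • ∑ j, x j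

/-- Empirical covariance `C(x) = (1/J) ∑ⱼ (x⁽ʲ⁾ - x̄)(x⁽ʲ⁾ - x̄)ᵀ`. -/
def ecov {d J : ℕ} (x : Fin J → EuclideanSpace ℝ (Fin d)) : Matrix (Fin d) (Fin d) ℝ :=
  (J : ℝ)⁻¹ • ∑ j, vecMulVec (fun i => (x j - emean x) i) (fun i => (x j - emean x) i)

/-- Convex subdifferential `∂R(x) = {ξ | ∀ z, R z ≥ R x + ⟪ξ, z - x⟫}`. -/
def subderiv {d : ℕ} (R : EuclideanSpace ℝ (Fin d) → ℝ) (x : EuclideanSpace ℝ (Fin d)) :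
    Set (EuclideanSpace ℝ (Fin d)) :=
  {ξ | ∀ z, R x + ⟪ξ, z - x⟫ ≤ R z}

/-- Squared weighted norm `‖v‖_C² = vᵀ C⁻¹ v`. -/
def wnormSq {d : ℕ} (C : Matrix (Fin d) (Fin d) ℝ) (v : EuclideanSpace ℝ (Fin d)) : ℝ :=
  ⟪v, mulVecE C⁻¹ v⟫

/-- Smallest eigenvalue of a symmetric matrix, via the Rayleigh quotient. -/
def lamMin {d : ℕ} (C : Matrix (Fin d) (Fin d) ℝ) : ℝ :=
  ⨅ v : {v : EuclideanSpace ℝ (Fin d) // ‖v‖ = 1}, ⟪mulVecE C v.1, v.1⟫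

/-- Largest eigenvalue of a symmetric matrix, via the Rayleigh quotient. -/
def lamMax {d : ℕ} (C : Matrix (Fin d) (Fin d) ℝ) : ℝ :=
  ⨆ v : {v : EuclideanSpace ℝ (Fin d) // ‖v‖ = 1}, ⟪mulVecE C v.1, v.1⟫

end

noncomputable section Aux

/-- `mulVecE` as a continuous linear map. -/
def mclm {m n : ℕ} (M : Matrix (Fin m) (Fin n) ℝ) :
    EuclideanSpace ℝ (Fin n) →L[ℝ] EuclideanSpace ℝ (Fin m) :=
  LinearMap.toContinuousLinearMap (Matrix.toEuclideanLin M)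

lemma mclm_apply {m n : ℕ} (M : Matrix (Fin m) (Fin n) ℝ) (v : EuclideanSpace ℝ (Fin n)) :
    mclm M v = mulVecE M v := by
  rfl

lemma inner_mulVecE {m n : ℕ} (M : Matrix (Fin m) (Fin n) ℝ)
    (u : EuclideanSpace ℝ (Fin n)) (v : EuclideanSpace ℝ (Fin m)) :
    ⟪mulVecE M u, v⟫ = ⟪u, mulVecE Mᵀ v⟫ := by
  simp only [mulVecE, PiLp.inner_apply, RCLike.inner_apply, conj_trivial,
    Matrix.transpose_apply, Finset.sum_mul, Finset.mul_sum]
  rw [Finset.sum_comm]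
  apply Finset.sum_congr rfl
  intro i _
  apply Finset.sum_congr rfl
  intro j _
  ring

lemma mulVecE_mul {m n p : ℕ} (M : Matrix (Fin m) (Fin n) ℝ) (N : Matrix (Fin n) (Fin p) ℝ)
    (v : EuclideanSpace ℝ (Fin p)) :
    mulVecE (M * N) v = mulVecE M (mulVecE N v) := by
  ext i
  show ((M * N).mulVec v) i = (M.mulVec (N.mulVec v)) i
  rw [Matrix.mulVec_mulVec]

lemma mulVecE_neg {m n : ℕ} (M : Matrix (Fin m) (Fin n) ℝ) (v : EuclideanSpace ℝ (Fin n)) :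
    mulVecE M (-v) = -mulVecE M v := by
  ext i
  simp [mulVecE, mul_neg, Finset.sum_neg_distrib]

end Aux

/-- for a linear forward map `G(x) = Ax` the cross-covariance satisfies
`C^{x,G} = C(x)Aᵀ`, and the deterministic EKI dynamics coincide with the
covariance-preconditioned gradient flow for `Φ(x) = ½(Ax-y)ᵀΓ⁻¹(Ax-y)`. -/
theorem stmt16 {d K J : ℕ} (A : Matrix (Fin K) (Fin d) ℝ) (Γ : Matrix (Fin K) (Fin K) ℝ)
    (hΓ : Γ.PosDef) (y : EuclideanSpace ℝ (Fin K))
    (x : Fin J → EuclideanSpace ℝ (Fin d))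
    (Cxg : Matrix (Fin d) (Fin K) ℝ)
    (hCxg : Cxg = (J : ℝ)⁻¹ • ∑ j, vecMulVec (fun i => (x j - emean x) i)
        (fun i => (mulVecE A (x j) - mulVecE A (emean x)) i))
    (Phi : EuclideanSpace ℝ (Fin d) → ℝ)
    (hPhi : ∀ z, Phi z = (1 / 2) * ⟪mulVecE A z - y, mulVecE Γ⁻¹ (mulVecE A z - y)⟫)
    (gradPhi : EuclideanSpace ℝ (Fin d) → EuclideanSpace ℝ (Fin d))
    (hgrad : ∀ z, gradPhi z = mulVecE (Aᵀ * Γ⁻¹) (mulVecE A z - y)) :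
    Cxg = ecov x * Aᵀ ∧
      (∀ z, HasGradientAt Phi (gradPhi z) z) ∧
      ∀ j, mulVecE (Cxg * Γ⁻¹) (y - mulVecE A (x j)) =
        -mulVecE (ecov x) (gradPhi (x j)) := by
  -- symmetry of Γ⁻¹
  have hsymm : (Γ⁻¹)ᵀ = Γ⁻¹ := by
    have h := hΓ.1.inv
    simpa [Matrix.IsHermitian, Matrix.conjTranspose_eq_transpose_of_trivial] using h
  -- Part 1
  have part1 : Cxg = ecov x * Aᵀ := by
    rw [hCxg, ecov, Matrix.smul_mul, Matrix.sum_mul]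
    congr 1
    apply Finset.sum_congr rfl
    intro j _
    ext i k
    simp only [vecMulVec_apply, Matrix.mul_apply, Matrix.transpose_apply, mulVecE,
      PiLp.sub_apply]
    rw [← Finset.sum_sub_distrib, Finset.mul_sum]
    apply Finset.sum_congr rfl
    intro l _
    ring
  refine ⟨part1, ?_, ?_⟩
  · -- gradient
    intro z
    rw [hasGradientAt_iff_hasFDerivAt]
    have hA : HasFDerivAt (fun w => mclm A w - y) (mclm A) z :=
      (mclm A).hasFDerivAt.sub_const y
    have hB : HasFDerivAt (fun w => mclm Γ⁻¹ (mclm A w - y)) ((mclm Γ⁻¹).comp (mclm A)) z :=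
      ((mclm Γ⁻¹).hasFDerivAt.comp z hA)
    have hinner := (hA.inner ℝ hB).const_mul (1/2 : ℝ)
    have hPhi' : Phi = fun w => (1/2 : ℝ) * ⟪mclm A w - y, mclm Γ⁻¹ (mclm A w - y)⟫ := by
      funext w; rw [hPhi w, mclm_apply, mclm_apply]
    rw [hPhi']
    convert hinner using 1
    · rfl
    refine ContinuousLinearMap.ext fun h => ?_
    simp only [ContinuousLinearMap.smul_apply, ContinuousLinearMap.comp_apply,
      fderivInnerCLM_apply, ContinuousLinearMap.prod_apply, smul_eq_mul,
      InnerProductSpace.toDual_apply_apply]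
    set r : EuclideanSpace ℝ (Fin K) := mulVecE A z - y with hr
    have e1 : mclm A z - y = r := by rw [mclm_apply]
    rw [e1]
    have t1 : ⟪r, mclm Γ⁻¹ (mclm A h)⟫ = ⟪gradPhi z, h⟫ := by
      rw [mclm_apply, mclm_apply, ← mulVecE_mul]
      have : Γ⁻¹ * A = (Aᵀ * Γ⁻¹)ᵀ := by
        rw [Matrix.transpose_mul, Matrix.transpose_transpose, hsymm]
      rw [this, ← inner_mulVecE, hgrad z]
    have t2 : ⟪mclm A h, mclm Γ⁻¹ r⟫ = ⟪gradPhi z, h⟫ := by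
      rw [mclm_apply, mclm_apply, inner_mulVecE, ← mulVecE_mul, hgrad z,
        real_inner_comm]
    rw [t1, t2]
    ring
  · -- part 3
    intro j
    rw [part1, hgrad (x j), ← mulVecE_mul, Matrix.mul_assoc, ← mulVecE_neg]
    ext i
    simp
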